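/- Let G = (σ0,σ1,σ2,σ3) be a 3-gem on a vertex set V with |V| ≥ 4 and let {u,v} be a 2-dipole of G on colors {2,3}. Let G' be the thickening of this 2-dipole of type 0, obtained by replacing σ0 by τ∘σ0∘τ where τ is the transposition exchanging u and σ0 v (so that in G' the 0-colored edges pair u with v and σ0 u with σ0 v, all other 0-edges being unchanged). Then G' is again a 3-gem, the set {u,v} is a {0,2,3}-residue of G' with exactly two vertices, and this residue is a {0,2,3}-dipole of G', i.e., σ1 u ≠ v, so u and v lie in distinct {1}-residues. -/

import Mathlib

/-!
We model a (3+1)-graph on a finite nonempty vertex set `V` as a quadruple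
`σ : Fin 4 → Equiv.Perm V` of fixed-point-free involutions whose generated
subgroup acts transitively on `V`.
-/

/-- `f` is a fixed-point-free involution. -/
def IsFPFInvolution {V : Type*} (f : Equiv.Perm V) : Prop :=
  (∀ x, f x ≠ x) ∧ ∀ x, f (f x) = x

/-- `x` and `y` lie in the same `I`-residue: `y` is in the orbit of `x` under the
subgroup generated by the permutations of the colors in `I`. -/
def SameResidue {V : Type*} (σ : Fin 4 → Equiv.Perm V) (I : Set (Fin 4)) (x y : V) : Prop :=
  ∃ g ∈ Subgroup.closure (σ '' I), g x = y

/-- The set of `I`-residues (orbits on `V` of the subgroup generated by the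
permutations of colors in `I`). -/
def residues {V : Type*} (σ : Fin 4 → Equiv.Perm V) (I : Set (Fin 4)) : Set (Set V) :=
  {O | ∃ x, O = {y | SameResidue σ I x y}}

/-- The number of `I`-residues. -/
noncomputable def numResidues {V : Type*} (σ : Fin 4 → Equiv.Perm V) (I : Set (Fin 4)) : ℕ :=
  (residues σ I).ncard

/-- A (3+1)-graph: four fixed-point-free involutions generating a subgroup that acts
transitively on the vertex set. -/
def IsGraph31 {V : Type*} (σ : Fin 4 → Equiv.Perm V) : Prop :=
  (∀ c, IsFPFInvolution (σ c)) ∧ ∀ x y : V, SameResidue σ Set.univ x y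

/-- `b(G)`: total number of bigons (`ij`-gons over the six unordered pairs of colors). -/
noncomputable def bCount {V : Type*} (σ : Fin 4 → Equiv.Perm V) : ℕ :=
  ∑ p ∈ Finset.univ.filter (fun p : Fin 4 × Fin 4 => p.1 < p.2),
    numResidues σ ({p.1, p.2} : Set (Fin 4))

/-- `t(G)`: total number of 3-residues over the four 3-element subsets of colors. -/
noncomputable def tCount {V : Type*} (σ : Fin 4 → Equiv.Perm V) : ℕ :=
  ∑ c : Fin 4, numResidues σ (({c}ᶜ : Set (Fin 4)))

/-- A 3-gem: a (3+1)-graph with `v(G) + t(G) = b(G)`. -/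
def IsGem {V : Type*} [Fintype V] (σ : Fin 4 → Equiv.Perm V) : Prop :=
  IsGraph31 σ ∧ Fintype.card V + tCount σ = bCount σ

/-- A crystallization: a 3-gem with no 1-dipoles, i.e. for every color `c` and vertex `x`,
the vertices `x` and `σ c x` lie in the same `({0,1,2,3} \ {c})`-residue. -/
def IsCrystallization {V : Type*} [Fintype V] (σ : Fin 4 → Equiv.Perm V) : Prop :=
  IsGem σ ∧ ∀ (c : Fin 4) (x : V), SameResidue σ (({c}ᶜ : Set (Fin 4))) x (σ c x)

/-- The thickening of type 0 of a 2-dipole `{u,v}` on colors `{2,3}`: replace `σ 0` by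
`τ ∘ σ 0 ∘ τ` where `τ` is the transposition exchanging `u` and `σ 0 v`. -/
def thicken0 {V : Type*} [DecidableEq V] (σ : Fin 4 → Equiv.Perm V) (u v : V) :
    Fin 4 → Equiv.Perm V :=
  fun c => if c = 0 then Equiv.swap u (σ 0 v) * σ 0 * Equiv.swap u (σ 0 v) else σ c
section Aux
variable {V : Type*}

theorem sr_refl (σ : Fin 4 → Equiv.Perm V) (I : Set (Fin 4)) (x : V) :
    SameResidue σ I x x := ⟨1, Subgroup.one_mem _, rfl⟩

theorem sr_symm {σ : Fin 4 → Equiv.Perm V} {I : Set (Fin 4)} {x y : V}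
    (h : SameResidue σ I x y) : SameResidue σ I y x := by
  obtain ⟨g, hg, rfl⟩ := h
  exact ⟨g⁻¹, Subgroup.inv_mem _ hg, by simp⟩

theorem sr_trans {σ : Fin 4 → Equiv.Perm V} {I : Set (Fin 4)} {x y z : V}
    (hxy : SameResidue σ I x y) (hyz : SameResidue σ I y z) : SameResidue σ I x z := by
  obtain ⟨g, hg, rfl⟩ := hxy
  obtain ⟨h, hh, rfl⟩ := hyz
  exact ⟨h * g, Subgroup.mul_mem _ hh hg, rfl⟩

theorem sr_gen {σ : Fin 4 → Equiv.Perm V} {I : Set (Fin 4)} {c : Fin 4} (hc : c ∈ I) (x : V) :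
    SameResidue σ I x (σ c x) :=
  ⟨σ c, Subgroup.subset_closure ⟨c, hc, rfl⟩, rfl⟩

theorem sr_mono {σ : Fin 4 → Equiv.Perm V} {I J : Set (Fin 4)} (hIJ : I ⊆ J) {x y : V}
    (h : SameResidue σ I x y) : SameResidue σ J x y := by
  obtain ⟨g, hg, rfl⟩ := h
  exact ⟨g, Subgroup.closure_mono (Set.image_mono hIJ) hg, rfl⟩

theorem sr_ind {σ : Fin 4 → Equiv.Perm V} {I : Set (Fin 4)} (E : V → V → Prop)
    (hrefl : ∀ x, E x x) (hsymm : ∀ {x y}, E x y → E y x)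
    (htrans : ∀ {x y z}, E x y → E y z → E x z)
    (hgen : ∀ c ∈ I, ∀ x, E x (σ c x)) {x y : V}
    (h : SameResidue σ I x y) : E x y := by
  obtain ⟨g, hg, rfl⟩ := h
  have key : ∀ x, E x (g x) := by
    refine Subgroup.closure_induction (p := fun g _ => ∀ x, E x (g x))
      (fun s hs => ?_) (fun x => by simpa using hrefl x)
      (fun a b _ _ ha hb x => ?_) (fun a _ ha x => ?_) hg
    · obtain ⟨c, hc, rfl⟩ := hs
      exact hgen c hc
    · have h1 := hb x
      have h2 := ha (b x)
      exact htrans h1 h2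
    · have := ha (a⁻¹ x)
      rw [← Equiv.Perm.mul_apply, mul_inv_cancel, Equiv.Perm.one_apply] at this
      exact hsymm this
  exact key _

theorem orb_eq {σ : Fin 4 → Equiv.Perm V} {I : Set (Fin 4)} {x y : V}
    (h : SameResidue σ I x y) :
    {z | SameResidue σ I x z} = {z | SameResidue σ I y z} :=
  Set.ext fun _ => ⟨fun hz => sr_trans (sr_symm h) hz, fun hz => sr_trans h hz⟩

theorem even_card_aux [DecidableEq V] (f : V → V) (hinv : ∀ x, f (f x) = x) :
    ∀ s : Finset V, (∀ x ∈ s, f x ∈ s) → (∀ x ∈ s, f x ≠ x) → Even s.card := by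
  intro s
  induction s using Finset.strongInduction with
  | _ s ih =>
    intro hmap hfpf
    rcases s.eq_empty_or_nonempty with rfl | ⟨x, hx⟩
    · simp
    · have hfx : f x ∈ s := hmap x hx
      have hne : f x ≠ x := hfpf x hx
      have hsub : {x, f x} ⊆ s := by
        intro y hy
        rcases Finset.mem_insert.1 hy with rfl | hy
        · exact hx
        · rcases Finset.mem_singleton.1 hy with rfl
          exact hfx
      have hssub : s \ {x, f x} ⊂ s := by
        refine Finset.sdiff_ssubset hsub ?_
        exact ⟨x, Finset.mem_insert_self _ _⟩
      have hcard2 : ({x, f x} : Finset V).card = 2 := by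
        rw [Finset.card_insert_of_notMem (by simpa using hne.symm), Finset.card_singleton]
      have hev := ih _ hssub ?_ ?_
      · have hc : (s \ {x, f x}).card = s.card - 2 := by
          rw [Finset.card_sdiff_of_subset hsub, hcard2]
        have hle : 2 ≤ s.card := hcard2 ▸ Finset.card_le_card hsub
        rw [hc] at hev
        rw [Nat.even_iff] at hev ⊢
        omega
      · intro y hy
        rw [Finset.mem_sdiff] at hy ⊢
        obtain ⟨hys, hyn⟩ := hy
        simp only [Finset.mem_insert, Finset.mem_singleton] at hyn
        push_neg at hyn
        refine ⟨hmap y hys, ?_⟩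
        simp only [Finset.mem_insert, Finset.mem_singleton]
        push_neg
        constructor
        · intro h; exact hyn.2 (by rw [← h, hinv])
        · intro h; exact hyn.1 (by have := congrArg f h; rwa [hinv, hinv] at this)
      · intro y hy
        exact hfpf y (Finset.mem_sdiff.1 hy).1

end Aux
section Thick
variable {V : Type*} [DecidableEq V] (σ : Fin 4 → Equiv.Perm V) (u v : V)

theorem t0_ne {c : Fin 4} (hc : c ≠ 0) : thicken0 σ u v c = σ c := by
  simp [thicken0, hc]

/-- Full description of the action of the new 0-permutation. -/
theorem t0_apply0 (hinv : ∀ y, σ 0 (σ 0 y) = y) (hfpf : ∀ y, σ 0 y ≠ y)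
    (huv : u ≠ v) (hub : σ 0 u ≠ v) (x : V) :
    thicken0 σ u v 0 x =
      if x = u then v else if x = v then u
      else if x = σ 0 u then σ 0 v else if x = σ 0 v then σ 0 u else σ 0 x := by
  have hbu : σ 0 v ≠ u := fun h => hub (by rw [← h, hinv])
  have hau : σ 0 u ≠ u := hfpf u
  have hbv : σ 0 v ≠ v := hfpf v
  have hab : σ 0 u ≠ σ 0 v := fun h => huv (by
    have := congrArg (σ 0) h; rwa [hinv, hinv] at this)
  have happ : ∀ y, thicken0 σ u v 0 y =
      Equiv.swap u (σ 0 v) (σ 0 (Equiv.swap u (σ 0 v) y)) := by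
    intro y; simp [thicken0, Equiv.Perm.mul_apply]
  rw [happ]
  by_cases h1 : x = u
  · subst h1
    rw [if_pos rfl, Equiv.swap_apply_left, hinv,
      Equiv.swap_apply_of_ne_of_ne (Ne.symm huv) (Ne.symm hbv)]
  · by_cases h2 : x = v
    · subst h2
      rw [if_neg h1, if_pos rfl,
        Equiv.swap_apply_of_ne_of_ne (Ne.symm huv) (Ne.symm hbv), Equiv.swap_apply_right]
    · by_cases h3 : x = σ 0 u
      · subst h3
        rw [if_neg hau, if_neg hub, if_pos rfl,
          Equiv.swap_apply_of_ne_of_ne hau hab, hinv, Equiv.swap_apply_left]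
      · by_cases h4 : x = σ 0 v
        · subst h4
          rw [if_neg hbu, if_neg hbv, if_neg (Ne.symm hab), if_pos rfl,
            Equiv.swap_apply_right, Equiv.swap_apply_of_ne_of_ne hau hab]
        · have hxu : σ 0 x ≠ u := fun h => h3 (by rw [← hinv x, h])
          have hxb : σ 0 x ≠ σ 0 v := fun h => h2 (by
            have := congrArg (σ 0) h; rwa [hinv, hinv] at this)
          rw [if_neg h1, if_neg h2, if_neg h3, if_neg h4,
            Equiv.swap_apply_of_ne_of_ne h1 h4, Equiv.swap_apply_of_ne_of_ne hxu hxb]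

end Thick
section Crux
variable {V : Type*} [Fintype V] [DecidableEq V] (σ : Fin 4 → Equiv.Perm V) (u v : V)

theorem crux_lemma (hinv0 : ∀ y, σ 0 (σ 0 y) = y) (hfpf0 : ∀ y, σ 0 y ≠ y)
    (hinv1 : ∀ y, σ 1 (σ 1 y) = y) (hfpf1 : ∀ y, σ 1 y ≠ y)
    (huv : u ≠ v) (hub : σ 0 u ≠ v)
    (hdip : ¬ SameResidue σ ({0, 1} : Set (Fin 4)) u v) :
    SameResidue (thicken0 σ u v) ({0, 1} : Set (Fin 4)) v (σ 0 v) := by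
  by_contra hA
  have h0m : (0 : Fin 4) ∈ ({0, 1} : Set (Fin 4)) := Set.mem_insert _ _
  have h1m : (1 : Fin 4) ∈ ({0, 1} : Set (Fin 4)) := Set.mem_insert_iff.2 (Or.inr rfl)
  have teval := t0_apply0 σ u v hinv0 hfpf0 huv hub
  have ht1 : thicken0 σ u v 1 = σ 1 := t0_ne σ u v (by decide)
  set σ' := thicken0 σ u v with hσ'
  set A := {y | SameResidue σ' ({0, 1} : Set (Fin 4)) v y} with hAdef
  set C := {y | SameResidue σ ({0, 1} : Set (Fin 4)) u y} with hCdef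
  have hbu : σ 0 v ≠ u := fun h => hub (by rw [← h, hinv0])
  have hs'v : σ' 0 v = u := by rw [teval v, if_neg (Ne.symm huv), if_pos rfl]
  have hs'a : σ' 0 (σ 0 u) = σ 0 v := by
    rw [teval (σ 0 u), if_neg (hfpf0 u), if_neg hub, if_pos rfl]
  have huA : u ∈ A := by
    have := sr_gen (σ := σ') h0m v
    rwa [hs'v] at this
  have hbA : σ 0 v ∉ A := hA
  have haA : σ 0 u ∉ A := by
    intro h
    apply hA
    have := sr_trans h (sr_gen (σ := σ') h0m (σ 0 u))
    rwa [hs'a] at this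
  have hvC : v ∉ C := hdip
  have hbC : σ 0 v ∉ C := by
    intro h
    apply hdip
    have h2 := sr_gen (σ := σ) h0m (σ 0 v)
    rw [hinv0] at h2
    exact sr_trans h h2
  have huC : u ∈ C := sr_refl σ _ u
  set D : Finset V := (Set.toFinite (A ∩ C)).toFinset with hDdef
  have hmemD : ∀ y, y ∈ D ↔ y ∈ A ∧ y ∈ C := by
    intro y; rw [hDdef, Set.Finite.mem_toFinset]; exact Set.mem_inter_iff _ _ _
  have huD : u ∈ D := (hmemD u).2 ⟨huA, huC⟩
  have heven1 : Even D.card := by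
    refine even_card_aux (σ 1) hinv1 D ?_ (fun y _ => hfpf1 y)
    · intro y hy
      obtain ⟨hyA, hyC⟩ := (hmemD y).1 hy
      refine (hmemD _).2 ⟨?_, sr_trans hyC (sr_gen h1m y)⟩
      have := sr_trans hyA (sr_gen (σ := σ') h1m y)
      rwa [ht1] at this
  have heven2 : Even (D.erase u).card := by
    refine even_card_aux (σ 0) hinv0 _ ?_ ?_
    · intro y hy
      obtain ⟨hyne, hyD⟩ := Finset.mem_erase.1 hy
      obtain ⟨hyA, hyC⟩ := (hmemD y).1 hyD
      have hyv : y ≠ v := fun h => hvC (h ▸ hyC)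
      have hya : y ≠ σ 0 u := fun h => haA (h ▸ hyA)
      have hyb : y ≠ σ 0 v := fun h => hbA (h ▸ hyA)
      have hs'y : σ' 0 y = σ 0 y := by
        rw [teval y, if_neg hyne, if_neg hyv, if_neg hya, if_neg hyb]
      refine Finset.mem_erase.2 ⟨?_, (hmemD _).2 ⟨?_, sr_trans hyC (sr_gen h0m y)⟩⟩
      · intro h
        exact hya (by rw [← hinv0 y, h])
      · have := sr_trans hyA (sr_gen (σ := σ') h0m y)
        rwa [hs'y] at this
    · intro y hy
      exact hfpf0 y
  have hcard : (D.erase u).card = D.card - 1 := Finset.card_erase_of_mem huD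
  have hpos : 1 ≤ D.card := Finset.card_pos.2 ⟨u, huD⟩
  rw [Nat.even_iff] at heven1 heven2
  omega

end Crux
section Char
variable {V : Type*} [DecidableEq V] (σ : Fin 4 → Equiv.Perm V) (u v : V)

theorem char_split (hfpf : ∀ c, IsFPFInvolution (σ c)) (huv : u ≠ v)
    (hdip : ¬ SameResidue σ ({0, 1} : Set (Fin 4)) u v)
    (I : Set (Fin 4)) (h0 : (0 : Fin 4) ∈ I)
    (hIc : ∀ c ∈ I, c ≠ 0 → σ c u = v) (hIx : ∃ c ∈ I, c ≠ 0) (x y : V) :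
    SameResidue (thicken0 σ u v) I x y ↔
      ((x = u ∨ x = v) ∧ (y = u ∨ y = v)) ∨
      (¬(x = u ∨ x = v) ∧ ¬(y = u ∨ y = v) ∧ SameResidue σ I x y) := by
  have hinv0 := (hfpf 0).2
  have hfpf0 := (hfpf 0).1
  have hub : σ 0 u ≠ v := by
    intro h
    apply hdip
    have := sr_gen (σ := σ) (I := ({0, 1} : Set (Fin 4))) (Set.mem_insert (0 : Fin 4) _) u
    rwa [h] at this
  have teval := t0_apply0 σ u v hinv0 hfpf0 huv hub
  have hau : σ 0 u ≠ u := hfpf0 u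
  have hbv : σ 0 v ≠ v := hfpf0 v
  have hbu : σ 0 v ≠ u := fun h => hub (by rw [← h, hinv0])
  have hs'u : thicken0 σ u v 0 u = v := by rw [teval u, if_pos rfl]
  have hs'v : thicken0 σ u v 0 v = u := by rw [teval v, if_neg (Ne.symm huv), if_pos rfl]
  have hs'a : thicken0 σ u v 0 (σ 0 u) = σ 0 v := by
    rw [teval (σ 0 u), if_neg hau, if_neg hub, if_pos rfl]
  have hs'b : thicken0 σ u v 0 (σ 0 v) = σ 0 u := by
    have hab : σ 0 u ≠ σ 0 v := fun h => huv (by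
      have := congrArg (σ 0) h; rwa [hinv0, hinv0] at this)
    rw [teval (σ 0 v), if_neg hbu, if_neg hbv, if_neg (Ne.symm hab), if_pos rfl]
  have hs'x : ∀ z, z ≠ u → z ≠ v → z ≠ σ 0 u → z ≠ σ 0 v → thicken0 σ u v 0 z = σ 0 z := by
    intro z h1 h2 h3 h4
    rw [teval z, if_neg h1, if_neg h2, if_neg h3, if_neg h4]
  -- involutions of the non-zero colors of I
  have hIcv : ∀ c ∈ I, c ≠ 0 → σ c v = u := by
    intro c hc hc0
    rw [← hIc c hc hc0, (hfpf c).2]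
  obtain ⟨c₀, hc₀I, hc₀0⟩ := hIx
  have Ruv : SameResidue σ I u v := by
    have := sr_gen (σ := σ) hc₀I u
    rwa [hIc c₀ hc₀I hc₀0] at this
  have R'uv : SameResidue (thicken0 σ u v) I u v := by
    have := sr_gen (σ := thicken0 σ u v) h0 u
    rwa [hs'u] at this
  have Rab : SameResidue σ I (σ 0 u) (σ 0 v) := by
    have h1 := sr_gen (σ := σ) h0 (σ 0 u)
    rw [hinv0] at h1
    have h2 := sr_gen (σ := σ) h0 v
    exact sr_trans h1 (sr_trans Ruv h2)
  have R'ab : SameResidue (thicken0 σ u v) I (σ 0 u) (σ 0 v) := by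
    have := sr_gen (σ := thicken0 σ u v) h0 (σ 0 u)
    rwa [hs'a] at this
  -- the {u,v} orbit is closed in the thickened graph
  have horb : ∀ z w, SameResidue (thicken0 σ u v) I z w → ((z = u ∨ z = v) ↔ (w = u ∨ w = v)) := by
    intro z w h
    refine sr_ind (fun z w => ((z = u ∨ z = v) ↔ (w = u ∨ w = v))) (fun _ => Iff.rfl)
      (fun h => h.symm) (fun h g => h.trans g) ?_ h
    intro c hc z
    by_cases hc0 : c = 0
    · subst hc0
      by_cases h1 : z = u
      · subst h1; rw [hs'u]; exact iff_of_true (Or.inl rfl) (Or.inr rfl)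
      · by_cases h2 : z = v
        · subst h2; rw [hs'v]; exact iff_of_true (Or.inr rfl) (Or.inl rfl)
        · by_cases h3 : z = σ 0 u
          · subst h3; rw [hs'a]
            exact iff_of_false (by tauto) (by rintro (h | h); exacts [hbu h, hbv h])
          · by_cases h4 : z = σ 0 v
            · subst h4; rw [hs'b]
              exact iff_of_false (by tauto) (by rintro (h | h); exacts [hau h, hub h])
            · rw [hs'x z h1 h2 h3 h4]
              refine iff_of_false (by tauto) ?_
              rintro (h | h)
              · exact h3 (by rw [← hinv0 z, h])
              · exact h4 (by rw [← hinv0 z, h])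
    · rw [t0_ne σ u v hc0]
      by_cases h1 : z = u
      · subst h1; rw [hIc c hc hc0]; exact iff_of_true (Or.inl rfl) (Or.inr rfl)
      · by_cases h2 : z = v
        · subst h2; rw [hIcv c hc hc0]; exact iff_of_true (Or.inr rfl) (Or.inl rfl)
        · refine iff_of_false (by tauto) ?_
          rintro (h | h)
          · exact h2 (by rw [← (hfpf c).2 z, h, hIc c hc hc0])
          · exact h1 (by rw [← (hfpf c).2 z, h, hIcv c hc hc0])
  have horbu : ∀ w, SameResidue (thicken0 σ u v) I u w → (w = u ∨ w = v) := by
    intro w h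
    exact (horb u w h).1 (Or.inl rfl)
  have hnua : ¬ SameResidue (thicken0 σ u v) I u (σ 0 u) := by
    intro h
    rcases horbu _ h with h | h
    exacts [hau h, hub h]
  -- R ⊆ F
  have hRF : ∀ z w, SameResidue σ I z w →
      (SameResidue (thicken0 σ u v) I z w ∨
       (SameResidue (thicken0 σ u v) I u z ∧ SameResidue (thicken0 σ u v) I (σ 0 u) w) ∨
       (SameResidue (thicken0 σ u v) I (σ 0 u) z ∧ SameResidue (thicken0 σ u v) I u w)) := by
    intro z w h
    set R' := SameResidue (thicken0 σ u v) I with hR'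
    refine sr_ind (fun z w => R' z w ∨ (R' u z ∧ R' (σ 0 u) w) ∨ (R' (σ 0 u) z ∧ R' u w))
      (fun z => Or.inl (sr_refl _ _ z)) ?_ ?_ ?_ h
    · rintro z w (h | ⟨h1, h2⟩ | ⟨h1, h2⟩)
      · exact Or.inl (sr_symm h)
      · exact Or.inr (Or.inr ⟨h2, h1⟩)
      · exact Or.inr (Or.inl ⟨h2, h1⟩)
    · rintro z w w' (h | ⟨h1, h2⟩ | ⟨h1, h2⟩) (g | ⟨g1, g2⟩ | ⟨g1, g2⟩)
      · exact Or.inl (sr_trans h g)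
      · exact Or.inr (Or.inl ⟨sr_trans g1 (sr_symm h), g2⟩)
      · exact Or.inr (Or.inr ⟨sr_trans g1 (sr_symm h), g2⟩)
      · exact Or.inr (Or.inl ⟨h1, sr_trans h2 g⟩)
      · exact absurd (sr_trans g1 (sr_symm h2)) hnua
      · exact Or.inl (sr_trans (sr_symm h1) g2)
      · exact Or.inr (Or.inr ⟨h1, sr_trans h2 g⟩)
      · exact Or.inl (sr_trans (sr_symm h1) g2)
      · exact absurd (sr_trans h2 (sr_symm g1)) hnua
    · intro c hc z
      by_cases hc0 : c = 0
      · subst hc0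
        by_cases h1 : z = u
        · subst h1; exact Or.inr (Or.inl ⟨sr_refl _ _ _, sr_refl _ _ _⟩)
        · by_cases h2 : z = v
          · subst h2; exact Or.inr (Or.inl ⟨R'uv, R'ab⟩)
          · by_cases h3 : z = σ 0 u
            · subst h3; rw [hinv0 u]
              exact Or.inr (Or.inr ⟨sr_refl _ _ _, sr_refl _ _ _⟩)
            · by_cases h4 : z = σ 0 v
              · subst h4; rw [hinv0 v]
                exact Or.inr (Or.inr ⟨R'ab, R'uv⟩)
              · refine Or.inl ?_
                have := sr_gen (σ := thicken0 σ u v) h0 z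
                rwa [hs'x z h1 h2 h3 h4] at this
      · refine Or.inl ?_
        have := sr_gen (σ := thicken0 σ u v) hc z
        rwa [t0_ne σ u v hc0] at this
  constructor
  · intro h
    refine sr_ind (fun z w =>
        ((z = u ∨ z = v) ∧ (w = u ∨ w = v)) ∨
        (¬(z = u ∨ z = v) ∧ ¬(w = u ∨ w = v) ∧ SameResidue σ I z w)) ?_ ?_ ?_ ?_ h
    · intro z
      by_cases hz : z = u ∨ z = v
      · exact Or.inl ⟨hz, hz⟩
      · exact Or.inr ⟨hz, hz, sr_refl _ _ _⟩
    · rintro z w (⟨h1, h2⟩ | ⟨h1, h2, h3⟩)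
      · exact Or.inl ⟨h2, h1⟩
      · exact Or.inr ⟨h2, h1, sr_symm h3⟩
    · rintro z w w' (⟨h1, h2⟩ | ⟨h1, h2, h3⟩) (⟨g1, g2⟩ | ⟨g1, g2, g3⟩)
      · exact Or.inl ⟨h1, g2⟩
      · exact absurd h2 g1
      · exact absurd g1 h2
      · exact Or.inr ⟨h1, g2, sr_trans h3 g3⟩
    · intro c hc z
      by_cases hc0 : c = 0
      · subst hc0
        by_cases h1 : z = u
        · subst h1; rw [hs'u]; exact Or.inl ⟨Or.inl rfl, Or.inr rfl⟩
        · by_cases h2 : z = v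
          · subst h2; rw [hs'v]; exact Or.inl ⟨Or.inr rfl, Or.inl rfl⟩
          · by_cases h3 : z = σ 0 u
            · subst h3; rw [hs'a]
              exact Or.inr ⟨by tauto, by rintro (h | h); exacts [hbu h, hbv h], Rab⟩
            · by_cases h4 : z = σ 0 v
              · subst h4; rw [hs'b]
                exact Or.inr ⟨by rintro (h | h); exacts [hbu h, hbv h],
                  by rintro (h | h); exacts [hau h, hub h], sr_symm Rab⟩
              · rw [hs'x z h1 h2 h3 h4]
                refine Or.inr ⟨by tauto, ?_, sr_gen h0 z⟩
                rintro (h | h)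
                · exact h3 (by rw [← hinv0 z, h])
                · exact h4 (by rw [← hinv0 z, h])
      · rw [t0_ne σ u v hc0]
        by_cases h1 : z = u
        · subst h1; rw [hIc c hc hc0]; exact Or.inl ⟨Or.inl rfl, Or.inr rfl⟩
        · by_cases h2 : z = v
          · subst h2; rw [hIcv c hc hc0]; exact Or.inl ⟨Or.inr rfl, Or.inl rfl⟩
          · refine Or.inr ⟨by tauto, ?_, sr_gen hc z⟩
            rintro (h | h)
            · exact h2 (by rw [← (hfpf c).2 z, h, hIc c hc hc0])
            · exact h1 (by rw [← (hfpf c).2 z, h, hIcv c hc hc0])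
  · rintro (⟨hx, hy⟩ | ⟨hx, hy, hR⟩)
    · rcases hx with rfl | rfl <;> rcases hy with rfl | rfl
      exacts [sr_refl _ _ _, R'uv, sr_symm R'uv, sr_refl _ _ _]
    · rcases hRF x y hR with h | ⟨h1, h2⟩ | ⟨h1, h2⟩
      · exact h
      · exact absurd (horbu x h1) hx
      · exact absurd (horbu y h2) hy

end Char
section Char2
variable {V : Type*} [Fintype V] [DecidableEq V] (σ : Fin 4 → Equiv.Perm V) (u v : V)

theorem char_merge (hfpf : ∀ c, IsFPFInvolution (σ c)) (huv : u ≠ v)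
    (hdip : ¬ SameResidue σ ({0, 1} : Set (Fin 4)) u v) (x y : V) :
    SameResidue (thicken0 σ u v) ({0, 1} : Set (Fin 4)) x y ↔
      SameResidue σ ({0, 1} : Set (Fin 4)) x y ∨
      (SameResidue σ ({0, 1} : Set (Fin 4)) u x ∧ SameResidue σ ({0, 1} : Set (Fin 4)) v y) ∨
      (SameResidue σ ({0, 1} : Set (Fin 4)) v x ∧ SameResidue σ ({0, 1} : Set (Fin 4)) u y) := by
  have hinv0 := (hfpf 0).2
  have hfpf0 := (hfpf 0).1
  have h0m : (0 : Fin 4) ∈ ({0, 1} : Set (Fin 4)) := Set.mem_insert _ _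
  have h1m : (1 : Fin 4) ∈ ({0, 1} : Set (Fin 4)) := Set.mem_insert_iff.2 (Or.inr rfl)
  have hub : σ 0 u ≠ v := by
    intro h
    apply hdip
    have := sr_gen (σ := σ) (I := ({0, 1} : Set (Fin 4))) h0m u
    rwa [h] at this
  have teval := t0_apply0 σ u v hinv0 hfpf0 huv hub
  have hau : σ 0 u ≠ u := hfpf0 u
  have hbv : σ 0 v ≠ v := hfpf0 v
  have hbu : σ 0 v ≠ u := fun h => hub (by rw [← h, hinv0])
  have hab : σ 0 u ≠ σ 0 v := fun h => huv (by
    have := congrArg (σ 0) h; rwa [hinv0, hinv0] at this)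
  have hs'u : thicken0 σ u v 0 u = v := by rw [teval u, if_pos rfl]
  have hs'v : thicken0 σ u v 0 v = u := by rw [teval v, if_neg (Ne.symm huv), if_pos rfl]
  have hs'a : thicken0 σ u v 0 (σ 0 u) = σ 0 v := by
    rw [teval (σ 0 u), if_neg hau, if_neg hub, if_pos rfl]
  have hs'b : thicken0 σ u v 0 (σ 0 v) = σ 0 u := by
    rw [teval (σ 0 v), if_neg hbu, if_neg hbv, if_neg (Ne.symm hab), if_pos rfl]
  have hs'x : ∀ z, z ≠ u → z ≠ v → z ≠ σ 0 u → z ≠ σ 0 v → thicken0 σ u v 0 z = σ 0 z := by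
    intro z h1 h2 h3 h4
    rw [teval z, if_neg h1, if_neg h2, if_neg h3, if_neg h4]
  have hcrux : SameResidue (thicken0 σ u v) ({0, 1} : Set (Fin 4)) v (σ 0 v) :=
    crux_lemma σ u v hinv0 hfpf0 (hfpf 1).2 (hfpf 1).1 huv hub hdip
  have R'uv : SameResidue (thicken0 σ u v) ({0, 1} : Set (Fin 4)) u v := by
    have := sr_gen (σ := thicken0 σ u v) h0m u
    rwa [hs'u] at this
  have R'ba : SameResidue (thicken0 σ u v) ({0, 1} : Set (Fin 4)) (σ 0 v) (σ 0 u) := by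
    have := sr_gen (σ := thicken0 σ u v) h0m (σ 0 v)
    rwa [hs'b] at this
  have key_u : SameResidue (thicken0 σ u v) ({0, 1} : Set (Fin 4)) u (σ 0 u) :=
    sr_trans R'uv (sr_trans hcrux R'ba)
  have RsubR' : ∀ z w, SameResidue σ ({0, 1} : Set (Fin 4)) z w →
      SameResidue (thicken0 σ u v) ({0, 1} : Set (Fin 4)) z w := by
    intro z w h
    refine sr_ind _ (sr_refl _ _) (fun h => sr_symm h) (fun h g => sr_trans h g) ?_ h
    intro c hc z
    rcases hc with rfl | hc
    · by_cases h1 : z = u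
      · subst h1; exact key_u
      · by_cases h2 : z = v
        · subst h2; exact hcrux
        · by_cases h3 : z = σ 0 u
          · subst h3; rw [hinv0 u]; exact sr_symm key_u
          · by_cases h4 : z = σ 0 v
            · subst h4; rw [hinv0 v]; exact sr_symm hcrux
            · have := sr_gen (σ := thicken0 σ u v) h0m z
              rwa [hs'x z h1 h2 h3 h4] at this
    · rcases hc with rfl
      have := sr_gen (σ := thicken0 σ u v) h1m z
      rwa [t0_ne σ u v (by decide)] at this
  constructor
  · intro h
    set R := SameResidue σ ({0, 1} : Set (Fin 4)) with hR
    refine sr_ind (fun z w => R z w ∨ (R u z ∧ R v w) ∨ (R v z ∧ R u w))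
      (fun z => Or.inl (sr_refl _ _ z)) ?_ ?_ ?_ h
    · rintro z w (h | ⟨h1, h2⟩ | ⟨h1, h2⟩)
      · exact Or.inl (sr_symm h)
      · exact Or.inr (Or.inr ⟨h2, h1⟩)
      · exact Or.inr (Or.inl ⟨h2, h1⟩)
    · rintro z w w' (h | ⟨h1, h2⟩ | ⟨h1, h2⟩) (g | ⟨g1, g2⟩ | ⟨g1, g2⟩)
      · exact Or.inl (sr_trans h g)
      · exact Or.inr (Or.inl ⟨sr_trans g1 (sr_symm h), g2⟩)
      · exact Or.inr (Or.inr ⟨sr_trans g1 (sr_symm h), g2⟩)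
      · exact Or.inr (Or.inl ⟨h1, sr_trans h2 g⟩)
      · exact absurd (sr_trans g1 (sr_symm h2)) hdip
      · exact Or.inl (sr_trans (sr_symm h1) g2)
      · exact Or.inr (Or.inr ⟨h1, sr_trans h2 g⟩)
      · exact Or.inl (sr_trans (sr_symm h1) g2)
      · exact absurd (sr_trans h2 (sr_symm g1)) hdip
    · intro c hc z
      rcases hc with rfl | hc
      · by_cases h1 : z = u
        · subst h1; rw [hs'u]
          exact Or.inr (Or.inl ⟨sr_refl _ _ _, sr_refl _ _ _⟩)
        · by_cases h2 : z = v
          · subst h2; rw [hs'v]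
            exact Or.inr (Or.inr ⟨sr_refl _ _ _, sr_refl _ _ _⟩)
          · by_cases h3 : z = σ 0 u
            · subst h3; rw [hs'a]
              refine Or.inr (Or.inl ⟨sr_gen h0m u, sr_gen h0m v⟩)
            · by_cases h4 : z = σ 0 v
              · subst h4; rw [hs'b]
                exact Or.inr (Or.inr ⟨sr_gen h0m v, sr_gen h0m u⟩)
              · rw [hs'x z h1 h2 h3 h4]
                exact Or.inl (sr_gen h0m z)
      · rcases hc with rfl
        rw [t0_ne σ u v (by decide)]
        exact Or.inl (sr_gen h1m z)
  · rintro (h | ⟨h1, h2⟩ | ⟨h1, h2⟩)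
    · exact RsubR' _ _ h
    · exact sr_trans (sr_symm (RsubR' _ _ h1)) (sr_trans R'uv (RsubR' _ _ h2))
    · exact sr_trans (sr_symm (RsubR' _ _ h1)) (sr_trans (sr_symm R'uv) (RsubR' _ _ h2))

theorem char_eq (hfpf : ∀ c, IsFPFInvolution (σ c)) (huv : u ≠ v)
    (hdip : ¬ SameResidue σ ({0, 1} : Set (Fin 4)) u v)
    (I : Set (Fin 4)) (h0 : (0 : Fin 4) ∈ I) (h1 : (1 : Fin 4) ∈ I)
    (hcw : ∃ c ∈ I, c ≠ 0 ∧ σ c u = v) (x y : V) :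
    SameResidue (thicken0 σ u v) I x y ↔ SameResidue σ I x y := by
  have hinv0 := (hfpf 0).2
  have hfpf0 := (hfpf 0).1
  have h0m : (0 : Fin 4) ∈ ({0, 1} : Set (Fin 4)) := Set.mem_insert _ _
  have hub : σ 0 u ≠ v := by
    intro h
    apply hdip
    have := sr_gen (σ := σ) (I := ({0, 1} : Set (Fin 4))) h0m u
    rwa [h] at this
  have teval := t0_apply0 σ u v hinv0 hfpf0 huv hub
  have hau : σ 0 u ≠ u := hfpf0 u
  have hbv : σ 0 v ≠ v := hfpf0 v
  have hbu : σ 0 v ≠ u := fun h => hub (by rw [← h, hinv0])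
  have hab : σ 0 u ≠ σ 0 v := fun h => huv (by
    have := congrArg (σ 0) h; rwa [hinv0, hinv0] at this)
  have hs'u : thicken0 σ u v 0 u = v := by rw [teval u, if_pos rfl]
  have hs'v : thicken0 σ u v 0 v = u := by rw [teval v, if_neg (Ne.symm huv), if_pos rfl]
  have hs'a : thicken0 σ u v 0 (σ 0 u) = σ 0 v := by
    rw [teval (σ 0 u), if_neg hau, if_neg hub, if_pos rfl]
  have hs'b : thicken0 σ u v 0 (σ 0 v) = σ 0 u := by
    rw [teval (σ 0 v), if_neg hbu, if_neg hbv, if_neg (Ne.symm hab), if_pos rfl]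
  have hs'x : ∀ z, z ≠ u → z ≠ v → z ≠ σ 0 u → z ≠ σ 0 v → thicken0 σ u v 0 z = σ 0 z := by
    intro z h1 h2 h3 h4
    rw [teval z, if_neg h1, if_neg h2, if_neg h3, if_neg h4]
  have hsub : ({0, 1} : Set (Fin 4)) ⊆ I := by
    intro t ht
    rcases ht with rfl | ht
    · exact h0
    · rcases ht with rfl
      exact h1
  have hcrux : SameResidue (thicken0 σ u v) I v (σ 0 v) :=
    sr_mono hsub (crux_lemma σ u v hinv0 hfpf0 (hfpf 1).2 (hfpf 1).1 huv hub hdip)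
  obtain ⟨c₀, hc₀I, hc₀0, hc₀uv⟩ := hcw
  have Ruv : SameResidue σ I u v := by
    have := sr_gen (σ := σ) hc₀I u
    rwa [hc₀uv] at this
  have R'uv : SameResidue (thicken0 σ u v) I u v := by
    have := sr_gen (σ := thicken0 σ u v) h0 u
    rwa [hs'u] at this
  have R'ba : SameResidue (thicken0 σ u v) I (σ 0 v) (σ 0 u) := by
    have := sr_gen (σ := thicken0 σ u v) h0 (σ 0 v)
    rwa [hs'b] at this
  have key_u : SameResidue (thicken0 σ u v) I u (σ 0 u) :=
    sr_trans R'uv (sr_trans hcrux R'ba)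
  have Rau : SameResidue σ I (σ 0 u) u := by
    have := sr_gen (σ := σ) h0 (σ 0 u)
    rwa [hinv0 u] at this
  have Rvb : SameResidue σ I v (σ 0 v) := sr_gen h0 v
  constructor
  · intro h
    refine sr_ind _ (sr_refl _ _) (fun h => sr_symm h) (fun h g => sr_trans h g) ?_ h
    intro c hc z
    by_cases hc0 : c = 0
    · subst hc0
      by_cases hz1 : z = u
      · subst hz1; rw [hs'u]; exact Ruv
      · by_cases hz2 : z = v
        · subst hz2; rw [hs'v]; exact sr_symm Ruv
        · by_cases hz3 : z = σ 0 u
          · subst hz3; rw [hs'a]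
            exact sr_trans Rau (sr_trans Ruv Rvb)
          · by_cases hz4 : z = σ 0 v
            · subst hz4; rw [hs'b]
              exact sr_trans (sr_symm Rvb) (sr_trans (sr_symm Ruv) (sr_symm Rau))
            · rw [hs'x z hz1 hz2 hz3 hz4]
              exact sr_gen h0 z
    · rw [t0_ne σ u v hc0]
      exact sr_gen hc z
  · intro h
    refine sr_ind _ (sr_refl _ _) (fun h => sr_symm h) (fun h g => sr_trans h g) ?_ h
    intro c hc z
    by_cases hc0 : c = 0
    · subst hc0
      by_cases hz1 : z = u
      · subst hz1; exact key_u
      · by_cases hz2 : z = v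
        · subst hz2; exact hcrux
        · by_cases hz3 : z = σ 0 u
          · subst hz3; rw [hinv0 u]; exact sr_symm key_u
          · by_cases hz4 : z = σ 0 v
            · subst hz4; rw [hinv0 v]; exact sr_symm hcrux
            · have := sr_gen (σ := thicken0 σ u v) h0 z
              rwa [hs'x z hz1 hz2 hz3 hz4] at this
    · have := sr_gen (σ := thicken0 σ u v) hc z
      rwa [t0_ne σ u v hc0] at this

end Char2
section Count
variable {V : Type*} [Fintype V] [DecidableEq V] (σ : Fin 4 → Equiv.Perm V) (u v : V)

theorem residues_congr (σ' : Fin 4 → Equiv.Perm V) (I : Set (Fin 4))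
    (h : ∀ x y, SameResidue σ' I x y ↔ SameResidue σ I x y) :
    residues σ' I = residues σ I := by
  ext O
  constructor
  · rintro ⟨x, rfl⟩
    exact ⟨x, Set.ext fun y => by simp only [Set.mem_setOf_eq]; exact h x y⟩
  · rintro ⟨x, rfl⟩
    exact ⟨x, Set.ext fun y => by simp only [Set.mem_setOf_eq]; exact (h x y).symm⟩

theorem count_nozero (I : Set (Fin 4)) (h0 : (0 : Fin 4) ∉ I) :
    numResidues (thicken0 σ u v) I = numResidues σ I := by
  have himg : thicken0 σ u v '' I = σ '' I :=
    Set.image_congr fun c hc => t0_ne σ u v (fun h => h0 (h ▸ hc))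
  unfold numResidues
  rw [residues_congr σ (thicken0 σ u v) I (fun x y => by unfold SameResidue; rw [himg])]

theorem count_merge (hfpf : ∀ c, IsFPFInvolution (σ c)) (huv : u ≠ v)
    (hdip : ¬ SameResidue σ ({0, 1} : Set (Fin 4)) u v) :
    numResidues σ ({0, 1} : Set (Fin 4)) =
      numResidues (thicken0 σ u v) ({0, 1} : Set (Fin 4)) + 1 := by
  have hchar := char_merge σ u v hfpf huv hdip
  set R := SameResidue σ ({0, 1} : Set (Fin 4)) with hR
  set A := {y | R u y} with hA
  set B := {y | R v y} with hB
  have keyAB : ∀ x, (R u x ∨ R v x) →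
      {y | SameResidue (thicken0 σ u v) ({0, 1} : Set (Fin 4)) x y} = A ∪ B := by
    intro x hx
    ext y
    rw [Set.mem_setOf_eq, hchar x y]
    constructor
    · rintro (h | ⟨h1, h2⟩ | ⟨h1, h2⟩)
      · rcases hx with hx | hx
        · exact Or.inl (sr_trans hx h)
        · exact Or.inr (sr_trans hx h)
      · exact Or.inr h2
      · exact Or.inl h2
    · rintro (h | h)
      · rcases hx with hx | hx
        · exact Or.inl (sr_trans (sr_symm hx) h)
        · exact Or.inr (Or.inr ⟨hx, h⟩)
      · rcases hx with hx | hx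
        · exact Or.inr (Or.inl ⟨hx, h⟩)
        · exact Or.inl (sr_trans (sr_symm hx) h)
  have hstep : residues (thicken0 σ u v) ({0, 1} : Set (Fin 4)) =
      insert (A ∪ B) (residues σ ({0, 1} : Set (Fin 4)) \ {A, B}) := by
    ext O
    constructor
    · rintro ⟨x, rfl⟩
      by_cases hx : R u x ∨ R v x
      · exact Set.mem_insert_iff.2 (Or.inl (keyAB x hx))
      · push_neg at hx
        refine Set.mem_insert_iff.2 (Or.inr ⟨⟨x, ?_⟩, ?_⟩)
        · ext y
          rw [Set.mem_setOf_eq, hchar x y, Set.mem_setOf_eq]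
          constructor
          · rintro (h | ⟨h1, h2⟩ | ⟨h1, h2⟩)
            · exact h
            · exact absurd h1 hx.1
            · exact absurd h1 hx.2
          · exact fun h => Or.inl h
        · intro hmem
          rcases hmem with hmem | hmem
          · have : x ∈ A := hmem ▸ sr_refl (thicken0 σ u v) _ x
            exact hx.1 this
          · rcases hmem with hmem
            have : x ∈ B := hmem ▸ sr_refl (thicken0 σ u v) _ x
            exact hx.2 this
    · intro hO
      rcases Set.mem_insert_iff.1 hO with rfl | ⟨⟨x, rfl⟩, hne⟩
      · exact ⟨u, (keyAB u (Or.inl (sr_refl _ _ u))).symm ▸ rfl⟩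
      · have hxu : ¬ R u x := by
          intro h
          exact hne (Or.inl (orb_eq h).symm)
        have hxv : ¬ R v x := by
          intro h
          exact hne (Or.inr (by
            show {y | R x y} = {y | R v y}
            exact (orb_eq h).symm))
        refine ⟨x, ?_⟩
        ext y
        rw [Set.mem_setOf_eq, Set.mem_setOf_eq, hchar x y]
        constructor
        · exact fun h => Or.inl h
        · rintro (h | ⟨h1, h2⟩ | ⟨h1, h2⟩)
          · exact h
          · exact absurd h1 hxu
          · exact absurd h1 hxv
  have hAmem : A ∈ residues σ ({0, 1} : Set (Fin 4)) := ⟨u, rfl⟩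
  have hBmem : B ∈ residues σ ({0, 1} : Set (Fin 4)) := ⟨v, rfl⟩
  have hvB : v ∈ B := sr_refl σ _ v
  have huA : u ∈ A := sr_refl σ _ u
  have hABne : A ≠ B := by
    intro h
    exact hdip (show v ∈ A from h ▸ hvB)
  have hsub : ({A, B} : Set (Set V)) ⊆ residues σ ({0, 1} : Set (Fin 4)) := by
    intro O hO
    rcases hO with rfl | hO
    · exact hAmem
    · rcases hO with rfl
      exact hBmem
  have hnot : (A ∪ B) ∉ residues σ ({0, 1} : Set (Fin 4)) \ {A, B} := by
    rintro ⟨⟨x, hx⟩, -⟩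
    have hxAB : x ∈ A ∪ B := by
      rw [hx]
      exact sr_refl σ _ x
    rcases hxAB with hux | hvx
    · have hAx : A = {y | R x y} := orb_eq hux
      have : v ∈ A := by
        rw [hAx, ← hx]
        exact Or.inr hvB
      exact hdip this
    · have hBx : B = {y | R x y} := orb_eq hvx
      have : u ∈ B := by
        rw [hBx, ← hx]
        exact Or.inl huA
      exact hdip (sr_symm this)
  have h2le : 2 ≤ (residues σ ({0, 1} : Set (Fin 4))).ncard := by
    rw [← Set.ncard_pair hABne]
    exact Set.ncard_le_ncard hsub (Set.toFinite _)
  show (residues σ ({0, 1} : Set (Fin 4))).ncard =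
    (residues (thicken0 σ u v) ({0, 1} : Set (Fin 4))).ncard + 1
  rw [hstep, Set.ncard_insert_of_notMem hnot, Set.ncard_diff hsub, Set.ncard_pair hABne]
  omega

end Count
section CountSplit
variable {V : Type*} [Fintype V] [DecidableEq V] (σ : Fin 4 → Equiv.Perm V) (u v : V)

theorem count_split (hfpf : ∀ c, IsFPFInvolution (σ c)) (huv : u ≠ v)
    (hdip : ¬ SameResidue σ ({0, 1} : Set (Fin 4)) u v)
    (I : Set (Fin 4)) (h0 : (0 : Fin 4) ∈ I)
    (hIc : ∀ c ∈ I, c ≠ 0 → σ c u = v) (hIx : ∃ c ∈ I, c ≠ 0) :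
    numResidues (thicken0 σ u v) I = numResidues σ I + 1 := by
  have hchar := char_split σ u v hfpf huv hdip I h0 hIc hIx
  have hinv0 := (hfpf 0).2
  have hfpf0 := (hfpf 0).1
  have hub : σ 0 u ≠ v := by
    intro h
    apply hdip
    have := sr_gen (σ := σ) (I := ({0, 1} : Set (Fin 4))) (Set.mem_insert _ _) u
    rwa [h] at this
  have hau : σ 0 u ≠ u := hfpf0 u
  have haout : ¬(σ 0 u = u ∨ σ 0 u = v) := by rintro (h | h); exacts [hau h, hub h]
  set R := SameResidue σ I with hR
  obtain ⟨c₀, hc₀I, hc₀0⟩ := hIx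
  have Ruv : R u v := by
    have := sr_gen (σ := σ) hc₀I u
    rwa [hIc c₀ hc₀I hc₀0] at this
  have Rua : R u (σ 0 u) := by
    have := sr_gen (σ := σ) h0 u
    exact this
  set A := {y | R u y} with hA
  set UV : Set V := {u, v} with hUV
  have hmemUV : ∀ z, z ∈ UV ↔ (z = u ∨ z = v) := fun z => Set.mem_insert_iff.trans
    (by rw [Set.mem_singleton_iff])
  have keyuv : ∀ x, (x = u ∨ x = v) →
      {y | SameResidue (thicken0 σ u v) I x y} = UV := by
    intro x hx
    ext y
    rw [Set.mem_setOf_eq, hchar x y, hmemUV y]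
    constructor
    · rintro (⟨h1, h2⟩ | ⟨h1, h2, h3⟩)
      · exact h2
      · exact absurd hx h1
    · exact fun h => Or.inl ⟨hx, h⟩
  have keyA : ∀ x, ¬(x = u ∨ x = v) → R u x →
      {y | SameResidue (thicken0 σ u v) I x y} = A \ UV := by
    intro x hx hux
    ext y
    rw [Set.mem_setOf_eq, hchar x y, Set.mem_diff, hmemUV y]
    constructor
    · rintro (⟨h1, h2⟩ | ⟨h1, h2, h3⟩)
      · exact absurd h1 hx
      · exact ⟨sr_trans hux h3, h2⟩
    · rintro ⟨hy, hyout⟩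
      exact Or.inr ⟨hx, hyout, sr_trans (sr_symm hux) hy⟩
  have keyO : ∀ x, ¬(x = u ∨ x = v) → ¬ R u x →
      {y | SameResidue (thicken0 σ u v) I x y} = {y | R x y} := by
    intro x hx hux
    ext y
    rw [Set.mem_setOf_eq, Set.mem_setOf_eq, hchar x y]
    constructor
    · rintro (⟨h1, h2⟩ | ⟨h1, h2, h3⟩)
      · exact absurd h1 hx
      · exact h3
    · intro h
      refine Or.inr ⟨hx, ?_, h⟩
      rintro (rfl | rfl)
      · exact hux (sr_symm h)
      · exact hux (sr_trans Ruv (sr_symm h))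
  have hstep : residues (thicken0 σ u v) I =
      insert UV (insert (A \ UV) (residues σ I \ {A})) := by
    ext O
    constructor
    · rintro ⟨x, rfl⟩
      by_cases hx : x = u ∨ x = v
      · exact Set.mem_insert_iff.2 (Or.inl (keyuv x hx))
      · by_cases hux : R u x
        · exact Set.mem_insert_iff.2 (Or.inr (Set.mem_insert_iff.2 (Or.inl (keyA x hx hux))))
        · refine Set.mem_insert_iff.2 (Or.inr (Set.mem_insert_iff.2 (Or.inr ⟨⟨x, keyO x hx hux⟩, ?_⟩)))
          intro hmem
          have hmem' : {y | SameResidue (thicken0 σ u v) I x y} = A := hmem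
          apply hux
          show x ∈ A
          rw [← hmem']
          exact sr_refl _ _ x
    · intro hO
      rcases Set.mem_insert_iff.1 hO with rfl | hO
      · exact ⟨u, (keyuv u (Or.inl rfl)).symm ▸ rfl⟩
      · rcases Set.mem_insert_iff.1 hO with rfl | ⟨⟨x, rfl⟩, hne⟩
        · exact ⟨σ 0 u, (keyA (σ 0 u) haout Rua).symm ▸ rfl⟩
        · have hux : ¬ R u x := by
            intro h
            exact hne (show {y | R x y} = A from (orb_eq h).symm)
          have hx : ¬(x = u ∨ x = v) := by
            rintro (rfl | rfl)
            · exact hux (sr_refl σ I x)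
            · exact hux Ruv
          exact ⟨x, (keyO x hx hux).symm⟩
  -- memberships for counting
  have hAmem : A ∈ residues σ I := ⟨u, rfl⟩
  have huUV : u ∈ UV := Or.inl rfl
  have haA : σ 0 u ∈ A := Rua
  have haUV : σ 0 u ∉ UV := fun h => haout ((hmemUV _).1 h)
  have huA : u ∈ A := sr_refl σ I u
  have hnot1 : UV ∉ insert (A \ UV) (residues σ I \ {A}) := by
    intro hmem
    rcases Set.mem_insert_iff.1 hmem with h | ⟨⟨x, hx⟩, hne⟩
    · have : u ∈ A \ UV := h ▸ huUV
      exact this.2 huUV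
    · have hxUV : x ∈ UV := by
        rw [hx]
        exact sr_refl σ I x
      have hUVA : UV = A := by
        rcases (hmemUV x).1 hxUV with rfl | rfl
        · exact hx
        · rw [hx]
          exact (orb_eq Ruv).symm
      have : σ 0 u ∈ UV := hUVA ▸ haA
      exact haUV this
  have hnot2 : (A \ UV) ∉ residues σ I \ {A} := by
    rintro ⟨⟨x, hx⟩, hne⟩
    have hxm : x ∈ A \ UV := by
      rw [hx]
      exact sr_refl σ I x
    have hAx : A = {y | R x y} := orb_eq hxm.1
    have : u ∈ A \ UV := by
      rw [hx, ← hAx]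
      exact huA
    exact this.2 huUV
  have hsub : ({A} : Set (Set V)) ⊆ residues σ I := by
    intro O hO
    rcases hO with rfl
    exact hAmem
  have h1le : 1 ≤ (residues σ I).ncard := by
    rw [← Set.ncard_singleton A]
    exact Set.ncard_le_ncard hsub (Set.toFinite _)
  show (residues (thicken0 σ u v) I).ncard = (residues σ I).ncard + 1
  rw [hstep, Set.ncard_insert_of_notMem hnot1, Set.ncard_insert_of_notMem hnot2,
    Set.ncard_diff hsub, Set.ncard_singleton]
  omega

end CountSplit
section Sums
variable {V : Type*}

theorem bCount_eq (σ : Fin 4 → Equiv.Perm V) :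
    bCount σ = numResidues σ ({0, 1} : Set (Fin 4)) + numResidues σ ({0, 2} : Set (Fin 4)) +
      numResidues σ ({0, 3} : Set (Fin 4)) + numResidues σ ({1, 2} : Set (Fin 4)) +
      numResidues σ ({1, 3} : Set (Fin 4)) + numResidues σ ({2, 3} : Set (Fin 4)) := by
  unfold bCount
  rw [show (Finset.univ.filter fun p : Fin 4 × Fin 4 => p.1 < p.2) =
      ({((0 : Fin 4), (1 : Fin 4)), (0, 2), (0, 3), (1, 2), (1, 3), (2, 3)} :
        Finset (Fin 4 × Fin 4)) from by decide]
  rw [Finset.sum_insert (by decide), Finset.sum_insert (by decide),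
    Finset.sum_insert (by decide), Finset.sum_insert (by decide),
    Finset.sum_insert (by decide), Finset.sum_singleton]
  ring

theorem tCount_eq (σ : Fin 4 → Equiv.Perm V) :
    tCount σ = numResidues σ ({1, 2, 3} : Set (Fin 4)) + numResidues σ ({0, 2, 3} : Set (Fin 4)) +
      numResidues σ ({0, 1, 3} : Set (Fin 4)) + numResidues σ ({0, 1, 2} : Set (Fin 4)) := by
  have e0 : ({(0 : Fin 4)}ᶜ : Set (Fin 4)) = {1, 2, 3} := by
    ext x
    simp only [Set.mem_compl_iff, Set.mem_singleton_iff, Set.mem_insert_iff]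
    fin_cases x <;> decide
  have e1 : ({(1 : Fin 4)}ᶜ : Set (Fin 4)) = {0, 2, 3} := by
    ext x
    simp only [Set.mem_compl_iff, Set.mem_singleton_iff, Set.mem_insert_iff]
    fin_cases x <;> decide
  have e2 : ({(2 : Fin 4)}ᶜ : Set (Fin 4)) = {0, 1, 3} := by
    ext x
    simp only [Set.mem_compl_iff, Set.mem_singleton_iff, Set.mem_insert_iff]
    fin_cases x <;> decide
  have e3 : ({(3 : Fin 4)}ᶜ : Set (Fin 4)) = {0, 1, 2} := by
    ext x
    simp only [Set.mem_compl_iff, Set.mem_singleton_iff, Set.mem_insert_iff]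
    fin_cases x <;> decide
  unfold tCount
  rw [Fin.sum_univ_four, e0, e1, e2, e3]

end Sums
/-- Let `G` be a 3-gem on `V` with `|V| ≥ 4` and `{u,v}` a 2-dipole of
`G` on colors `{2,3}` (so `σ 2 u = v`, `σ 3 u = v`, and `u`, `v` lie in distinct
`{0,1}`-residues). Let `G'` be the thickening of this 2-dipole of type 0. Then `G'` is
again a 3-gem, the set `{u,v}` is a `{0,2,3}`-residue of `G'` with exactly two vertices,
and this residue is a `{0,2,3}`-dipole of `G'`: `σ 1 u ≠ v`, so `u` and `v` lie in
distinct `{1}`-residues of `G'`. -/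
theorem thicken0_isGem {V : Type*} [Fintype V] [DecidableEq V]
    (σ : Fin 4 → Equiv.Perm V) (hgem : IsGem σ) (hcard : 4 ≤ Fintype.card V)
    (u v : V) (huv : u ≠ v) (h2 : σ 2 u = v) (h3 : σ 3 u = v)
    (hdip : ¬ SameResidue σ ({0, 1} : Set (Fin 4)) u v) :
    IsGem (thicken0 σ u v) ∧
    {y | SameResidue (thicken0 σ u v) ({0, 2, 3} : Set (Fin 4)) u y} = {u, v} ∧
    σ 1 u ≠ v ∧
    ¬ SameResidue (thicken0 σ u v) ({1} : Set (Fin 4)) u v := by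
  have hfpf := hgem.1.1
  have htrans := hgem.1.2
  have hinv0 := (hfpf 0).2
  have hfpf0 := (hfpf 0).1
  have hinv1 := (hfpf 1).2
  -- membership facts
  have hIc23 : ∀ c ∈ ({0, 2, 3} : Set (Fin 4)), c ≠ 0 → σ c u = v := by
    intro c hc hc0
    rcases hc with rfl | hc
    · exact absurd rfl hc0
    · rcases hc with rfl | hc
      · exact h2
      · rcases hc with rfl
        exact h3
  have hIc2 : ∀ c ∈ ({0, 2} : Set (Fin 4)), c ≠ 0 → σ c u = v := by
    intro c hc hc0
    rcases hc with rfl | hc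
    · exact absurd rfl hc0
    · rcases hc with rfl
      exact h2
  have hIc3 : ∀ c ∈ ({0, 3} : Set (Fin 4)), c ≠ 0 → σ c u = v := by
    intro c hc hc0
    rcases hc with rfl | hc
    · exact absurd rfl hc0
    · rcases hc with rfl
      exact h3
  -- new 0-involution facts
  have ht0 : thicken0 σ u v 0 = Equiv.swap u (σ 0 v) * σ 0 * Equiv.swap u (σ 0 v) := by
    simp [thicken0]
  -- the numerical identities
  have e01 := count_merge σ u v hfpf huv hdip
  have e02 : numResidues (thicken0 σ u v) ({0, 2} : Set (Fin 4)) =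
      numResidues σ ({0, 2} : Set (Fin 4)) + 1 :=
    count_split σ u v hfpf huv hdip _ (Set.mem_insert _ _) hIc2
      ⟨2, Set.mem_insert_iff.2 (Or.inr rfl), by decide⟩
  have e03 : numResidues (thicken0 σ u v) ({0, 3} : Set (Fin 4)) =
      numResidues σ ({0, 3} : Set (Fin 4)) + 1 :=
    count_split σ u v hfpf huv hdip _ (Set.mem_insert _ _) hIc3
      ⟨3, Set.mem_insert_iff.2 (Or.inr rfl), by decide⟩
  have e023 : numResidues (thicken0 σ u v) ({0, 2, 3} : Set (Fin 4)) =
      numResidues σ ({0, 2, 3} : Set (Fin 4)) + 1 :=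
    count_split σ u v hfpf huv hdip _ (Set.mem_insert _ _) hIc23
      ⟨2, Set.mem_insert_iff.2 (Or.inr (Set.mem_insert _ _)), by decide⟩
  have e012 : numResidues (thicken0 σ u v) ({0, 1, 2} : Set (Fin 4)) =
      numResidues σ ({0, 1, 2} : Set (Fin 4)) := by
    unfold numResidues
    rw [residues_congr σ (thicken0 σ u v) _ (char_eq σ u v hfpf huv hdip _
      (Set.mem_insert _ _) (Set.mem_insert_iff.2 (Or.inr (Set.mem_insert _ _)))
      ⟨2, by simp [Set.mem_insert_iff], by decide, h2⟩)]
  have e013 : numResidues (thicken0 σ u v) ({0, 1, 3} : Set (Fin 4)) =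
      numResidues σ ({0, 1, 3} : Set (Fin 4)) := by
    unfold numResidues
    rw [residues_congr σ (thicken0 σ u v) _ (char_eq σ u v hfpf huv hdip _
      (Set.mem_insert _ _) (Set.mem_insert_iff.2 (Or.inr (Set.mem_insert _ _)))
      ⟨3, by simp [Set.mem_insert_iff], by decide, h3⟩)]
  have e123 : numResidues (thicken0 σ u v) ({1, 2, 3} : Set (Fin 4)) =
      numResidues σ ({1, 2, 3} : Set (Fin 4)) :=
    count_nozero σ u v _ (by simp)
  have e12 : numResidues (thicken0 σ u v) ({1, 2} : Set (Fin 4)) =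
      numResidues σ ({1, 2} : Set (Fin 4)) :=
    count_nozero σ u v _ (by simp)
  have e13 : numResidues (thicken0 σ u v) ({1, 3} : Set (Fin 4)) =
      numResidues σ ({1, 3} : Set (Fin 4)) :=
    count_nozero σ u v _ (by simp)
  have e23 : numResidues (thicken0 σ u v) ({2, 3} : Set (Fin 4)) =
      numResidues σ ({2, 3} : Set (Fin 4)) :=
    count_nozero σ u v _ (by simp)
  refine ⟨⟨⟨?_, ?_⟩, ?_⟩, ?_, ?_, ?_⟩
  · -- fixed-point-free involutions
    intro c
    by_cases hc : c = 0
    · subst hc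
      constructor
      · intro x hx
        rw [ht0] at hx
        simp only [Equiv.Perm.mul_apply] at hx
        have := congrArg (Equiv.swap u (σ 0 v)) hx
        rw [Equiv.swap_apply_self] at this
        exact hfpf0 _ this
      · intro x
        rw [ht0]
        simp only [Equiv.Perm.mul_apply, Equiv.swap_apply_self]
        rw [hinv0, Equiv.swap_apply_self]
    · rw [t0_ne σ u v hc]
      exact hfpf c
  · -- transitivity
    intro x y
    exact (char_eq σ u v hfpf huv hdip Set.univ (Set.mem_univ _) (Set.mem_univ _)
      ⟨2, Set.mem_univ _, by decide, h2⟩ x y).2 (htrans x y)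
  · -- the counting identity
    have hg := hgem.2
    rw [bCount_eq, tCount_eq] at hg ⊢
    rw [e01] at hg
    rw [e02, e03, e12, e13, e23, e123, e012, e013, e023]
    omega
  · -- the {0,2,3}-residue of u is {u,v}
    ext y
    rw [Set.mem_setOf_eq, char_split σ u v hfpf huv hdip _ (Set.mem_insert _ _) hIc23
      ⟨2, Set.mem_insert_iff.2 (Or.inr (Set.mem_insert _ _)), by decide⟩ u y]
    constructor
    · rintro (⟨h1, hy⟩ | ⟨h1, -⟩)
      · rcases hy with rfl | rfl
        · exact Set.mem_insert _ _
        · exact Set.mem_insert_iff.2 (Or.inr rfl)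
      · exact absurd (Or.inl rfl) h1
    · intro hy
      rcases Set.mem_insert_iff.1 hy with rfl | hy
      · exact Or.inl ⟨Or.inl rfl, Or.inl rfl⟩
      · rcases hy with rfl
        exact Or.inl ⟨Or.inl rfl, Or.inr rfl⟩
  · -- σ 1 u ≠ v
    intro h
    apply hdip
    have := sr_gen (σ := σ) (I := ({0, 1} : Set (Fin 4)))
      (Set.mem_insert_iff.2 (Or.inr rfl)) u
    rwa [h] at this
  · -- u and v in distinct {1}-residues of the thickening
    intro h
    have h1uv : σ 1 u ≠ v := by
      intro h
      apply hdip
      have := sr_gen (σ := σ) (I := ({0, 1} : Set (Fin 4)))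
        (Set.mem_insert_iff.2 (Or.inr rfl)) u
      rwa [h] at this
    have := sr_ind (fun x y => y = x ∨ y = σ 1 x) (fun _ => Or.inl rfl) ?_ ?_ ?_ h
    · rcases this with h' | h'
      · exact huv h'.symm
      · exact h1uv h'.symm
    · rintro x y (rfl | h')
      · exact Or.inl rfl
      · exact Or.inr (by rw [h', hinv1])
    · rintro x y z (rfl | h') (rfl | g')
      · exact Or.inl rfl
      · exact Or.inr g'
      · exact Or.inr h'
      · rw [g', h', hinv1]
        exact Or.inl rfl
    · intro c hc z
      rcases Set.mem_singleton_iff.1 hc with rfl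
      rw [t0_ne σ u v (by decide)]
      exact Or.inr rfl
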